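/- Let k be a field and let R = k[x, y, y^{-1}]/(x^2) be the quotient of the Laurent-polynomial extension k[x][y, y^{-1}] by the ideal generated by x^2. Let σ be the k-algebra automorphism of R determined by σ(x) = xy and σ(y) = y. Then σ does not preserve a frame of R; indeed, the elements σ^i(x) = x y^i for i ≥ 0 span an infinite-dimensional k-subspace of R, so x lies in no σ-invariant frame. -/

import Mathlib

noncomputable section

open LaurentPolynomial Polynomial

/-- The ring `R = k[x, y, y⁻¹]/(x²)`, realized as the quotient of the ring of
Laurent polynomials over `k[x]` by the ideal generated by `x²`. -/
abbrev ExampleRing (k : Type*) [Field k] : Type _ :=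
  LaurentPolynomial (Polynomial k) ⧸
    (Ideal.span {LaurentPolynomial.C (Polynomial.X : Polynomial k) ^ 2})

/-- A frame of a `k`-algebra `R` is a finite-dimensional `k`-subspace `V` of `R`
such that `1 ∈ V` and `V` generates `R` as a `k`-algebra. -/
def IsFrame (k : Type*) {R : Type*} [Field k] [Ring R] [Algebra k R]
    (V : Submodule k R) : Prop :=
  (1 : R) ∈ V ∧ FiniteDimensional k V ∧ Algebra.adjoin k (V : Set R) = ⊤

namespace NoFrameAux

variable (k : Type*) [Field k]

abbrev Iex : Ideal (LaurentPolynomial (Polynomial k)) :=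
  Ideal.span {LaurentPolynomial.C (Polynomial.X : Polynomial k) ^ 2}

abbrev mke : LaurentPolynomial (Polynomial k) →+* ExampleRing k :=
  Ideal.Quotient.mk (Iex k)

/-- coefficient extraction, upstairs -/
def pr (i : ℕ) : LaurentPolynomial (Polynomial k) →ₗ[k] LaurentPolynomial k :=
  (AddMonoidAlgebra.coeffLinearEquiv k).symm.toLinearMap ∘ₗ
    Finsupp.mapRange.linearMap (Polynomial.lcoeff k i) ∘ₗ
      (AddMonoidAlgebra.coeffLinearEquiv k).toLinearMap

lemma pr_single (i : ℕ) (n : ℤ) (p : Polynomial k) :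
    pr k i (AddMonoidAlgebra.single n p) = AddMonoidAlgebra.single n (p.coeff i) :=
  congrArg AddMonoidAlgebra.ofCoeff (Finsupp.mapRange_single (hf := map_zero _))

lemma pr_CT (i : ℕ) (n : ℤ) (p : Polynomial k) :
    pr k i (LaurentPolynomial.C p * T n) = LaurentPolynomial.C (p.coeff i) * T n := by
  rw [← single_eq_C_mul_T p n, ← single_eq_C_mul_T (p.coeff i) n, pr_single]

lemma CT_mul {R : Type*} [CommSemiring R] (n m : ℤ) (p q : R) :
    (LaurentPolynomial.C p * T n) * (LaurentPolynomial.C q * T m)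
      = LaurentPolynomial.C (p * q) * T (n + m) := by
  rw [map_mul, T_add]
  ring

lemma pr_ideal (i : ℕ) (hi : i < 2) : ∀ g ∈ Iex k, pr k i g = 0 := by
  intro g hg
  rw [Iex, Ideal.mem_span_singleton] at hg
  obtain ⟨c, rfl⟩ := hg
  induction c using LaurentPolynomial.induction_on' with
  | add f g hf hg => rw [mul_add, map_add, hf, hg, add_zero]
  | C_mul_T n q =>
      rw [← mul_assoc, ← map_pow, ← map_mul, pr_CT]
      have : (Polynomial.X ^ 2 * q).coeff i = 0 := by
        rw [(Polynomial.commute_X_pow q 2).eq, Polynomial.coeff_mul_X_pow']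
        simp [not_le.mpr hi]
      rw [this, map_zero, zero_mul]

/-- coefficient extraction, downstairs -/
def pib (i : ℕ) (hi : i < 2) : ExampleRing k →ₗ[k] LaurentPolynomial k :=
  (Submodule.liftQ ((Iex k).restrictScalars k) (pr k i)
      (fun g hg => pr_ideal k i hi g hg)) ∘ₗ
    (Submodule.Quotient.restrictScalarsEquiv k (Iex k)).symm.toLinearMap

lemma pib_mk (i : ℕ) (hi : i < 2) (f : LaurentPolynomial (Polynomial k)) :
    pib k i hi (mke k f) = pr k i f := by
  show Submodule.liftQ ((Iex k).restrictScalars k) (pr k i)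
        (fun g hg => pr_ideal k i hi g hg)
      ((Submodule.Quotient.restrictScalarsEquiv k (Iex k)).symm (Submodule.Quotient.mk f))
      = pr k i f
  rw [Submodule.Quotient.restrictScalarsEquiv_symm_mk]
  rfl

lemma pib_mk_CT (i : ℕ) (hi : i < 2) (n : ℤ) (p : Polynomial k) :
    pib k i hi (mke k (LaurentPolynomial.C p * T n))
      = LaurentPolynomial.C (p.coeff i) * T n := by
  rw [pib_mk, pr_CT]

lemma coeff_one_mul' (p q : Polynomial k) :
    (p * q).coeff 1 = p.coeff 0 * q.coeff 1 + p.coeff 1 * q.coeff 0 := by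
  rw [Polynomial.coeff_mul, Finset.Nat.sum_antidiagonal_eq_sum_range_succ_mk]
  simp [Finset.sum_range_succ]

lemma pr_zero_mul (f g : LaurentPolynomial (Polynomial k)) :
    pr k 0 (f * g) = pr k 0 f * pr k 0 g := by
  induction f using LaurentPolynomial.induction_on' with
  | add f₁ f₂ h₁ h₂ => rw [add_mul, map_add, h₁, h₂, map_add, add_mul]
  | C_mul_T n p =>
    induction g using LaurentPolynomial.induction_on' with
    | add g₁ g₂ h₁ h₂ => rw [mul_add, map_add, h₁, h₂, map_add, mul_add]
    | C_mul_T m q =>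
        rw [CT_mul, pr_CT, pr_CT, pr_CT, CT_mul, Polynomial.mul_coeff_zero]

lemma pr_one_mul (f g : LaurentPolynomial (Polynomial k)) :
    pr k 1 (f * g) = pr k 0 f * pr k 1 g + pr k 1 f * pr k 0 g := by
  induction f using LaurentPolynomial.induction_on' with
  | add f₁ f₂ h₁ h₂ =>
      rw [add_mul, map_add, h₁, h₂, map_add, map_add, add_mul, add_mul]
      ring
  | C_mul_T n p =>
    induction g using LaurentPolynomial.induction_on' with
    | add g₁ g₂ h₁ h₂ =>
        rw [mul_add, map_add, h₁, h₂, map_add, map_add, mul_add, mul_add]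
        ring
    | C_mul_T m q =>
        rw [CT_mul, pr_CT, pr_CT, pr_CT, pr_CT, pr_CT, CT_mul, CT_mul, coeff_one_mul',
          map_add, add_mul]

lemma pib_zero_mul (a b : ExampleRing k) :
    pib k 0 (by norm_num) (a * b) = pib k 0 (by norm_num) a * pib k 0 (by norm_num) b := by
  obtain ⟨f, rfl⟩ := Ideal.Quotient.mk_surjective (I := Iex k) a
  obtain ⟨g, rfl⟩ := Ideal.Quotient.mk_surjective (I := Iex k) b
  rw [← map_mul, pib_mk, pib_mk, pib_mk, pr_zero_mul]

lemma pib_one_mul (a b : ExampleRing k) :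
    pib k 1 (by norm_num) (a * b) =
      pib k 0 (by norm_num) a * pib k 1 (by norm_num) b +
      pib k 1 (by norm_num) a * pib k 0 (by norm_num) b := by
  obtain ⟨f, rfl⟩ := Ideal.Quotient.mk_surjective (I := Iex k) a
  obtain ⟨g, rfl⟩ := Ideal.Quotient.mk_surjective (I := Iex k) b
  rw [← map_mul, pib_mk, pib_mk, pib_mk, pib_mk, pib_mk, pr_one_mul]

/-- decomposition of a monomial in the quotient -/
lemma mk_CT_decomp (n : ℤ) (p : Polynomial k) :
    mke k (LaurentPolynomial.C p * T n) =
      p.coeff 0 • mke k (T n) +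
        p.coeff 1 • (mke k (LaurentPolynomial.C (Polynomial.X : Polynomial k)) * mke k (T n)) := by
  have hp : p = Polynomial.C (p.coeff 0) + Polynomial.C (p.coeff 1) * Polynomial.X
      + Polynomial.X ^ 2 * p.divX.divX := by
    have h1 := Polynomial.X_mul_divX_add p
    have h2 := Polynomial.X_mul_divX_add p.divX
    rw [Polynomial.coeff_divX, zero_add] at h2
    conv_lhs => rw [← h1, ← h2]
    ring
  calc mke k (LaurentPolynomial.C p * T n)
      = mke k ((LaurentPolynomial.C (Polynomial.C (p.coeff 0)) * T n)
          + (LaurentPolynomial.C (Polynomial.C (p.coeff 1))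
              * (LaurentPolynomial.C (Polynomial.X : Polynomial k) * T n))
          + (LaurentPolynomial.C (Polynomial.X : Polynomial k) ^ 2
              * (LaurentPolynomial.C p.divX.divX * T n))) := by
        congr 1
        conv_lhs => rw [hp]
        rw [← map_pow]
        simp only [map_add, map_mul]
        ring
    _ = _ := by
        rw [map_add, map_add, map_mul, map_mul]
        have hz : mke k ((LaurentPolynomial.C (Polynomial.X : Polynomial k)) ^ 2
            * (LaurentPolynomial.C p.divX.divX * T n)) = 0 := by
          rw [Ideal.Quotient.eq_zero_iff_mem]
          exact Ideal.mem_span_singleton.mpr (dvd_mul_right _ _)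
        rw [hz, add_zero]
        have halg : ∀ a : k, mke k (LaurentPolynomial.C (Polynomial.C a))
            = (algebraMap k (ExampleRing k) : k →+* ExampleRing k) a := by
          intro a
          rfl
        rw [halg, halg, ← Algebra.smul_def, ← Algebra.smul_def, map_mul]

lemma pib_x (hi : (1:ℕ) < 2) :
    pib k 1 hi (mke k (LaurentPolynomial.C (Polynomial.X : Polynomial k))) = 1 := by
  rw [pib_mk, ← single_eq_C, pr_single, Polynomial.coeff_X_one]
  exact single_zero_one_eq_one

lemma pib_Y (hi : (1:ℕ) < 2) (n : ℤ) : pib k 1 hi (mke k (T n)) = 0 := by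
  rw [pib_mk, show (T n : LaurentPolynomial (Polynomial k)) = AddMonoidAlgebra.single n 1 from rfl,
    pr_single]
  simp [Polynomial.coeff_one]

lemma pib_xY (hi : (1:ℕ) < 2) (n : ℤ) :
    pib k 1 hi (mke k (LaurentPolynomial.C (Polynomial.X : Polynomial k) * T n)) = T n := by
  rw [pib_mk_CT]
  simp

lemma pib_algebraMap (hi : (1:ℕ) < 2) (c : k) :
    pib k 1 hi ((algebraMap k (ExampleRing k) : k →+* ExampleRing k) c) = 0 := by
  have : (algebraMap k (ExampleRing k) : k →+* ExampleRing k) c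
      = mke k (LaurentPolynomial.C (Polynomial.C c) * T 0) := by
    rw [T_zero, mul_one]; rfl
  rw [this, pib_mk_CT]
  simp [Polynomial.coeff_C]

lemma li_T : LinearIndependent k (fun i : ℕ => (T i : LaurentPolynomial k)) := by
  have h : LinearIndependent k (fun n : ℤ => (AddMonoidAlgebra.single n 1 : LaurentPolynomial k)) := by
    have := (AddMonoidAlgebra.basis ℤ k).linearIndependent
    convert this using 1
    funext n
    exact (AddMonoidAlgebra.basis_apply k n).symm
  exact h.comp (fun i : ℕ => (i : ℤ)) (fun a b hab => by simpa using hab)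

lemma not_fd_of_li {K M : Type*} [Field K] [AddCommGroup M] [Module K M]
    {g : ℕ → M} (hg : LinearIndependent K g) {W : Submodule K M}
    (hmem : ∀ i, g i ∈ W) : ¬ FiniteDimensional K W := by
  intro fd
  have hu : LinearIndependent K (fun i : ℕ => (⟨g i, hmem i⟩ : W)) :=
    LinearIndependent.of_comp W.subtype hg
  have hlt := hu.lt_aleph0_of_finiteDimensional
  rw [Cardinal.mk_nat] at hlt
  exact lt_irrefl _ hlt

abbrev pb1 : ExampleRing k →ₗ[k] LaurentPolynomial k := pib k 1 one_lt_two

abbrev pb0 : ExampleRing k →ₗ[k] LaurentPolynomial k := pib k 0 (by norm_num)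

lemma pb1_mul (a b : ExampleRing k) :
    pb1 k (a * b) = pb0 k a * pb1 k b + pb1 k a * pb0 k b := pib_one_mul k a b

lemma pb1_Y (n : ℤ) : pb1 k (mke k (T n)) = 0 := pib_Y k one_lt_two n

lemma pb1_x : pb1 k (mke k (LaurentPolynomial.C (Polynomial.X : Polynomial k))) = 1 :=
  pib_x k one_lt_two

lemma pb1_xY (n : ℤ) :
    pb1 k (mke k (LaurentPolynomial.C (Polynomial.X : Polynomial k)) * mke k (T n)) = T n := by
  rw [← map_mul]
  exact pib_xY k one_lt_two n

lemma pb1_algebraMap (c : k) : pb1 k ((algebraMap k (ExampleRing k) : k →+* ExampleRing k) c) = 0 :=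
  pib_algebraMap k one_lt_two c

lemma pb1_adjoin_zero (V : Submodule k (ExampleRing k)) (hV : ∀ v ∈ V, pb1 k v = 0) :
    ∀ r ∈ Algebra.adjoin k (V : Set (ExampleRing k)), pb1 k r = 0 := by
  intro r hr
  refine Algebra.adjoin_induction (fun v hv => hV v hv)
    (fun c => pb1_algebraMap k c)
    (fun a b _ _ ha hb => by rw [map_add, ha, hb, add_zero])
    (fun a b _ _ ha hb => by
      rw [pb1_mul k a b, ha, hb, mul_zero, zero_mul, add_zero]) hr

lemma mkT_add (a b : ℤ) : mke k (T (a + b)) = mke k (T a) * mke k (T b) := by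
  rw [T_add]
  exact map_mul _ _ _

lemma mkT_zero : mke k (T 0) = 1 := by
  rw [T_zero]
  exact map_one _

lemma isUnit_mkT (n : ℤ) : IsUnit (mke k (T n)) := by
  refine ⟨⟨mke k (T n), mke k (T (-n)), ?_, ?_⟩, rfl⟩
  · rw [← mkT_add, show n + -n = 0 by ring, mkT_zero]
  · rw [← mkT_add, show -n + n = 0 by ring, mkT_zero]

lemma not_fd_of_T_stable (W : Submodule k (LaurentPolynomial k)) (w : LaurentPolynomial k)
    (hw : w ∈ W) (hw0 : w ≠ 0) (hstab : ∀ u ∈ W, T 1 * u ∈ W) :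
    ¬ FiniteDimensional k W := by
  have hTn : ∀ i : ℕ, (T i : LaurentPolynomial k) * w ∈ W := by
    intro i; induction i with
    | zero => simpa using hw
    | succ i ih =>
        rw [show ((i + 1 : ℕ) : ℤ) = 1 + (i : ℤ) by push_cast; ring, T_add, mul_assoc]
        exact hstab _ ih
  refine not_fd_of_li ?_ hTn
  have hinj : Function.Injective (fun a : LaurentPolynomial k => a * w) :=
    mul_left_injective₀ hw0
  have h2 := (li_T k).map' (LinearMap.mulRight k w)
    (LinearMap.ker_eq_bot.mpr (by exact hinj))
  have hfun : (⇑(LinearMap.mulRight k w) ∘ fun i : ℕ => (T i : LaurentPolynomial k))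
      = fun i : ℕ => (T i : LaurentPolynomial k) * w := by
    funext i
    exact LinearMap.mulRight_apply (R := k) w (T i)
  rwa [hfun] at h2

end NoFrameAux

open NoFrameAux

set_option maxHeartbeats 1000000

/-- Let `R = k[x, y^{±1}]/(x²)` and let `σ` be the `k`-algebra automorphism of `R`
with `σ(x) = x y` and `σ(y) = y`.  Then `σ` does not preserve a frame of `R`;
indeed the elements `σ^i(x) = x yⁱ` span an infinite-dimensional subspace of `R`. -/
theorem no_sigma_invariant_frame (k : Type*) [Field k]
    (x y : ExampleRing k)
    (hx : x = Ideal.Quotient.mk _ (LaurentPolynomial.C (Polynomial.X : Polynomial k)))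
    (hy : y = Ideal.Quotient.mk _ (LaurentPolynomial.T 1))
    (σ : ExampleRing k ≃ₐ[k] ExampleRing k)
    (hσx : σ x = x * y) (hσy : σ y = y) :
    (¬ ∃ V : @Submodule k (ExampleRing k) _ _ Algebra.toModule, IsFrame k V ∧ V.map σ.toLinearMap = V) ∧
      ¬ FiniteDimensional k
        (Submodule.span k (Set.range fun i : ℕ => (σ ^ i) x)) := by
  subst hx hy
  -- σ fixes the images of all T n
  have hσT : ∀ n : ℤ, σ (mke k (T n)) = mke k (T n) := by
    intro n
    refine Int.induction_on n ?_ ?_ ?_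
    · rw [mkT_zero]
      exact map_one σ
    · intro i ih
      calc σ (mke k (T (i + 1))) = σ (mke k (T i) * mke k (T 1)) := by rw [← mkT_add]
        _ = σ (mke k (T i)) * σ (mke k (T 1)) := map_mul σ _ _
        _ = mke k (T i) * mke k (T 1) := by rw [ih, hσy]
        _ = mke k (T (i + 1)) := (mkT_add k i 1).symm
    · intro i ih
      have h5 : mke k (T (-(i : ℤ) - 1)) * mke k (T 1) = mke k (T (-(i : ℤ))) := by
        rw [← mkT_add, show -(i : ℤ) - 1 + 1 = -(i : ℤ) by ring]
      have h6 : σ (mke k (T (-(i : ℤ) - 1))) * mke k (T 1) = mke k (T (-(i : ℤ))) := by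
        calc σ (mke k (T (-(i : ℤ) - 1))) * mke k (T 1)
            = σ (mke k (T (-(i : ℤ) - 1))) * σ (mke k (T 1)) := by rw [hσy]
          _ = σ (mke k (T (-(i : ℤ) - 1)) * mke k (T 1)) := (map_mul σ _ _).symm
          _ = σ (mke k (T (-(i : ℤ)))) := by rw [h5]
          _ = mke k (T (-(i : ℤ))) := ih
      exact (isUnit_mkT k 1).mul_right_cancel (h6.trans h5.symm)
  -- σ sends x * T n to x * T (n+1)
  have hσxT : ∀ n : ℤ,
      σ (mke k (LaurentPolynomial.C (Polynomial.X : Polynomial k)) * mke k (T n))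
        = mke k (LaurentPolynomial.C (Polynomial.X : Polynomial k)) * mke k (T (n + 1)) := by
    intro n
    calc σ (mke k (LaurentPolynomial.C (Polynomial.X : Polynomial k)) * mke k (T n))
        = σ (mke k (LaurentPolynomial.C (Polynomial.X : Polynomial k))) * σ (mke k (T n)) :=
          map_mul σ _ _
      _ = (mke k (LaurentPolynomial.C (Polynomial.X : Polynomial k)) * mke k (T 1))
            * mke k (T n) := by rw [hσx, hσT n]
      _ = mke k (LaurentPolynomial.C (Polynomial.X : Polynomial k)) * mke k (T (n + 1)) := by
          rw [mkT_add k n 1]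
          ring
  -- equivariance of pb1
  have hEquiv : ∀ r : ExampleRing k, pb1 k (σ r) = T 1 * pb1 k r := by
    intro r
    obtain ⟨f, rfl⟩ := Ideal.Quotient.mk_surjective (I := Iex k) r
    induction f using LaurentPolynomial.induction_on' with
    | add f g hf hg => rw [map_add, map_add, map_add, map_add, mul_add, hf, hg]
    | C_mul_T n p =>
        rw [show (Ideal.Quotient.mk (Iex k)) (LaurentPolynomial.C p * T n)
            = mke k (LaurentPolynomial.C p * T n) from rfl, mk_CT_decomp, map_add, map_smul,
          map_smul, hσT n, hσxT n, map_add, map_smul, map_smul, map_add, map_smul, map_smul,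
          pb1_Y k n, pb1_xY k n, pb1_xY k (n + 1), smul_zero, mul_add, mul_zero, zero_add,
          zero_add, mul_smul_comm, ← T_add, show (1 : ℤ) + n = n + 1 by ring]
  have hpow : ∀ i : ℕ,
      (σ ^ i) (mke k (LaurentPolynomial.C (Polynomial.X : Polynomial k)))
        = mke k (LaurentPolynomial.C (Polynomial.X : Polynomial k)) * mke k (T i) := by
    intro i; induction i with
    | zero =>
        rw [pow_zero, show ((0 : ℕ) : ℤ) = 0 from rfl, mkT_zero]
        exact (AlgEquiv.one_apply _).trans (mul_one (M := ExampleRing k) _).symm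
    | succ i ih =>
        have hc : ((i + 1 : ℕ) : ℤ) = (i : ℤ) + 1 := by push_cast; ring
        rw [hc]
        calc (σ ^ (i + 1)) (mke k (LaurentPolynomial.C (Polynomial.X : Polynomial k)))
            = (σ * σ ^ i) (mke k (LaurentPolynomial.C (Polynomial.X : Polynomial k))) :=
              DFunLike.congr_fun (pow_succ' σ i) _
          _ = σ ((σ ^ i) (mke k (LaurentPolynomial.C (Polynomial.X : Polynomial k)))) := rfl
          _ = σ (mke k (LaurentPolynomial.C (Polynomial.X : Polynomial k)) * mke k (T i)) := by
              rw [ih]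
          _ = mke k (LaurentPolynomial.C (Polynomial.X : Polynomial k)) * mke k (T ((i : ℤ) + 1)) :=
              hσxT i
  constructor
  · rintro ⟨V, ⟨hV1, hVfd, hVadj⟩, hVinv⟩
    haveI : FiniteDimensional k V := hVfd
    haveI hWfd : FiniteDimensional k (V.map (pb1 k)) := Module.Finite.map V (pb1 k)
    have hex : ∃ w ∈ V.map (pb1 k), w ≠ 0 := by
      by_contra hno
      push_neg at hno
      have hVv : ∀ v ∈ V, pb1 k v = 0 := fun v hv => hno _ (Submodule.mem_map_of_mem hv)
      have hx0 : pb1 k (mke k (LaurentPolynomial.C (Polynomial.X : Polynomial k))) = 0 :=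
        pb1_adjoin_zero k V hVv _ (by rw [hVadj]; trivial)
      rw [pb1_x] at hx0
      exact one_ne_zero hx0
    obtain ⟨w, hwW, hw0⟩ := hex
    have hstab : ∀ u ∈ V.map (pb1 k), (T 1 : LaurentPolynomial k) * u ∈ V.map (pb1 k) := by
      rintro u ⟨v, hv, rfl⟩
      have hσv : σ v ∈ V := by
        rw [← hVinv]; exact Submodule.mem_map_of_mem hv
      exact ⟨σ v, hσv, hEquiv v⟩
    exact not_fd_of_T_stable k _ w hwW hw0 hstab hWfd
  · have hli : LinearIndependent k
        (fun i : ℕ => (σ ^ i) (mke k (LaurentPolynomial.C (Polynomial.X : Polynomial k)))) := by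
      apply LinearIndependent.of_comp (pb1 k)
      have hcomp : (⇑(pb1 k) ∘ fun i : ℕ =>
          (σ ^ i) (mke k (LaurentPolynomial.C (Polynomial.X : Polynomial k))))
          = fun i : ℕ => (T i : LaurentPolynomial k) := by
        funext i
        calc pb1 k ((σ ^ i) (mke k (LaurentPolynomial.C (Polynomial.X : Polynomial k))))
            = pb1 k (mke k (LaurentPolynomial.C (Polynomial.X : Polynomial k)) * mke k (T i)) :=
              by rw [hpow i]
          _ = T i := pb1_xY k i
      rw [hcomp]
      exact li_T k
    exact not_fd_of_li hli (fun i => Submodule.subset_span (Set.mem_range_self i))
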